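/- If S is a compact connected orientable surface with χ(S) < 0 and nonempty boundary, then S admits a finite cover with positive genus. -/

import Mathlib

/-!
Model of a compact connected orientable surface `S` of genus `g` with `m + 1 ≥ 1`
boundary components: its fundamental group is free on generators
`a_1, b_1, …, a_g, b_g, c_1, …, c_m`, where the boundary circles represent the
conjugacy classes of `c_1, …, c_m` and of
`(∏ i ⁅a_i, b_i⁆ · c_1 ⋯ c_m)⁻¹` (the last boundary component).
`H_1(S;ℤ)` is the abelianization of this free group, and `H_1(∂S;ℤ) ≅ ℤ^{m+1}`
has basis the fundamental classes of the boundary circles.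
-/

/-- Generators of π₁ of the surface of genus `g` with `m+1` boundary components. -/
abbrev SurfGen (g m : ℕ) := (Fin g × Bool) ⊕ Fin m

/-- π₁ of the surface: free of rank `2g + m`. -/
abbrev SurfPi1 (g m : ℕ) := FreeGroup (SurfGen g m)

open scoped commutatorElement

/-- The commutator `⁅a_i, b_i⁆` of the `i`-th handle generators. -/
def handleComm (g m : ℕ) (i : Fin g) : SurfPi1 g m :=
  ⁅(FreeGroup.of (Sum.inl (i, false)) : SurfPi1 g m), FreeGroup.of (Sum.inl (i, true))⁆

/-- The element of π₁ represented by the `i`-th boundary circle (with its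
induced orientation). -/
def surfBoundary (g m : ℕ) (i : Fin (m + 1)) : SurfPi1 g m :=
  if h : (i : ℕ) < m then FreeGroup.of (Sum.inr ⟨i, h⟩)
  else ((List.ofFn (handleComm g m)).prod *
      (List.ofFn fun j : Fin m => (FreeGroup.of (Sum.inr j) : SurfPi1 g m)).prod)⁻¹

/-!
Covering-space dictionary used below.  A finite cover of `S` corresponds to a
finite-index subgroup `K ≤ π₁(S)`.  By Nielsen–Schreier and multiplicativity of
Euler characteristic, the cover has `χ = [π₁(S) : K] · (2 - 2g - (m+1))`, and its
boundary components over `∂_i` correspond to the double cosets `K\π₁(S)/⟨∂_i⟩`.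
A compact connected orientable surface has positive genus iff `χ + #∂ ≤ 0`.
-/

noncomputable def surfPhi (g m : ℕ) : SurfPi1 g m →* Multiplicative (ZMod (m+1)) :=
  FreeGroup.lift (Sum.elim (fun _ => 1) (fun _ => Multiplicative.ofAdd 1))

theorem surfPhi_boundary (g m : ℕ) (i : Fin (m+1)) :
    surfPhi g m (surfBoundary g m i) = Multiplicative.ofAdd 1 := by
  unfold surfBoundary
  split_ifs with h
  · simp [surfPhi]
  · rw [map_inv, map_mul, map_list_prod, map_list_prod]
    have h1 : (List.ofFn (handleComm g m)).map (surfPhi g m) = List.replicate g 1 := by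
      rw [List.map_ofFn]
      have : ((surfPhi g m) ∘ handleComm g m) = fun _ => 1 := by
        funext i
        simp [handleComm, Function.comp, map_commutatorElement, commutatorElement_def,
          mul_comm]
      rw [this]
      simp [List.ofFn_const]
    have h2 : (List.ofFn fun j : Fin m => (FreeGroup.of (Sum.inr j) : SurfPi1 g m)).map
        (surfPhi g m) = List.replicate m (Multiplicative.ofAdd 1) := by
      rw [List.map_ofFn]
      have : ((surfPhi g m) ∘ fun j : Fin m => (FreeGroup.of (Sum.inr j) : SurfPi1 g m)) =
          fun _ => Multiplicative.ofAdd 1 := by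
        funext j; simp [surfPhi, Function.comp]
      rw [this, List.ofFn_const]
    rw [h1, h2, List.prod_replicate, List.prod_replicate, one_pow, one_mul]
    rw [← ofAdd_nsmul]
    rw [← ofAdd_neg]
    congr 1
    have : ((m : ZMod (m+1)) + 1) = 0 := by
      have := ZMod.natCast_self (m+1)
      push_cast at this ⊢
      linear_combination this
    rw [nsmul_eq_mul, mul_one]
    linear_combination -this

theorem doset_card_one (g m : ℕ) (i : Fin (m+1)) :
    Nat.card (DoubleCoset.Quotient ((surfPhi g m).ker : Set (SurfPi1 g m))
      (Subgroup.zpowers (surfBoundary g m i) : Set (SurfPi1 g m))) = 1 := by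
  set c := surfBoundary g m i with hcdef
  have hc : surfPhi g m c = Multiplicative.ofAdd 1 := surfPhi_boundary g m i
  have hsub : Subsingleton (DoubleCoset.Quotient ((surfPhi g m).ker : Set (SurfPi1 g m))
      (Subgroup.zpowers c : Set (SurfPi1 g m))) := by
    constructor
    intro a b
    refine Quotient.inductionOn₂' a b fun x y => ?_
    rw [show (Quotient.mk'' x : DoubleCoset.Quotient _ _) = DoubleCoset.mk _ _ x from rfl,
      show (Quotient.mk'' y : DoubleCoset.Quotient _ _) = DoubleCoset.mk _ _ y from rfl,
      DoubleCoset.eq]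
    set k := (Multiplicative.toAdd (surfPhi g m (x⁻¹ * y))).val with hk
    have hcast : ((k : ℕ) : ZMod (m+1)) = Multiplicative.toAdd (surfPhi g m (x⁻¹ * y)) :=
      ZMod.natCast_rightInverse _
    have h1 : (surfPhi g m c) ^ k = surfPhi g m x⁻¹ * surfPhi g m y := by
      rw [hc, ← ofAdd_nsmul, nsmul_eq_mul, mul_one, hcast, ofAdd_toAdd, map_mul]
    refine ⟨y * (c ^ k)⁻¹ * x⁻¹, ?_, c ^ k, Subgroup.npow_mem_zpowers c k, by group⟩
    rw [MonoidHom.mem_ker]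
    simp only [map_mul, map_inv, map_pow, h1]
    group
  haveI : Unique (DoubleCoset.Quotient ((surfPhi g m).ker : Set (SurfPi1 g m))
      (Subgroup.zpowers c : Set (SurfPi1 g m))) := Unique.mk' _
  exact Nat.card_unique

theorem surfPhi_surjective (g m : ℕ) : Function.Surjective (surfPhi g m) := by
  intro x
  refine ⟨(surfBoundary g m (Fin.last m)) ^ (Multiplicative.toAdd x).val, ?_⟩
  rw [map_pow, surfPhi_boundary, ← ofAdd_nsmul, nsmul_eq_mul, mul_one,
    ZMod.natCast_rightInverse _, ofAdd_toAdd]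

/-- If `S` is a compact connected orientable surface with
`χ(S) < 0` and nonempty boundary, then `S` admits a finite cover of positive
genus: there is a finite-index subgroup `K` of `π₁(S)` such that the
corresponding cover (with Euler characteristic `index · χ(S)` and with boundary
components counted by double cosets) has positive genus. -/
theorem finite_cover_with_positive_genus (g m : ℕ)
    (hχ : (2 : ℤ) - 2 * g - (m + 1) < 0) :
    ∃ K : Subgroup (SurfPi1 g m), K.index ≠ 0 ∧
      (K.index : ℤ) * (2 - 2 * g - (m + 1)) +
        ∑ i : Fin (m + 1),
          (Nat.card (DoubleCoset.Quotient (K : Set (SurfPi1 g m))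
            (Subgroup.zpowers (surfBoundary g m i) : Set (SurfPi1 g m))) : ℤ) ≤ 0 := by
  refine ⟨(surfPhi g m).ker, ?_, ?_⟩
  all_goals
    have hidx : (surfPhi g m).ker.index = m + 1 := by
      rw [Subgroup.index_ker, MonoidHom.range_eq_top.mpr (surfPhi_surjective g m),
        Nat.card_congr Subgroup.topEquiv.toEquiv,
        Nat.card_congr Multiplicative.ofAdd.symm, Nat.card_zmod]
  · simp [hidx]
  · have hsum : ∑ i : Fin (m + 1),
        (Nat.card (DoubleCoset.Quotient ((surfPhi g m).ker : Set (SurfPi1 g m))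
          (Subgroup.zpowers (surfBoundary g m i) : Set (SurfPi1 g m))) : ℤ) = m + 1 := by
      simp [doset_card_one]
    rw [hidx, hsum]
    have h1 : (2:ℤ) - 2 * g - (m + 1) ≤ -1 := by omega
    have h2 : (0:ℤ) ≤ (m:ℤ) + 1 := by positivity
    push_cast
    nlinarith [mul_le_mul_of_nonneg_left h1 h2]
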